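/- Let r_n(x) = (P_n(x) - P_n(-x))/(P_n(x) + P_n(-x)) with P_n the n-th Newman polynomial. Then for all x ∈ [-1,1] where defined, r_n'(x) = 4 (P_n(x) P_n(-x))/(P_n(x)+P_n(-x))^2 · ∑_{i=0}^{n-1} ξ^i/(ξ^{2i} - x^2), where ξ = exp(-n^{-1/2}). -/

import Mathlib

noncomputable def NewmanP (n : ℕ) (x : ℝ) : ℝ :=
  ∏ i ∈ Finset.range n, (x + (Real.exp (-(1 / Real.sqrt n))) ^ i)

noncomputable def newmanRat (n : ℕ) (x : ℝ) : ℝ :=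
  (NewmanP n x - NewmanP n (-x)) / (NewmanP n x + NewmanP n (-x))

theorem newman_rat_deriv (n : ℕ) (hn : 1 ≤ n) (x : ℝ) (hx : x ∈ Set.Icc (-1 : ℝ) 1)
    (hne : ∀ i ∈ Finset.range n, x ^ 2 ≠ (Real.exp (-(1 / Real.sqrt n))) ^ (2 * i)) :
    deriv (newmanRat n) x =
      4 * (NewmanP n x * NewmanP n (-x)) / (NewmanP n x + NewmanP n (-x)) ^ 2 *
        ∑ i ∈ Finset.range n,
          (Real.exp (-(1 / Real.sqrt n))) ^ i /
            ((Real.exp (-(1 / Real.sqrt n))) ^ (2 * i) - x ^ 2) := by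
  set ξ : ℝ := Real.exp (-(1 / Real.sqrt n)) with hξdef
  have hξpos : 0 < ξ := Real.exp_pos _
  -- positivity of denominator
  have hgpos : ∀ y : ℝ, 0 < NewmanP n y + NewmanP n (-y) := by
    have key : ∀ y : ℝ, 0 ≤ y → 0 < NewmanP n y + NewmanP n (-y) := by
      intro y hy
      have hPy : 0 < NewmanP n y := by
        apply Finset.prod_pos
        intro i _
        have := pow_pos hξpos i
        linarith
      by_cases hz : NewmanP n (-y) = 0
      · rw [hz]; linarith
      · have habs : |NewmanP n (-y)| ≤ NewmanP n y := by
          rw [NewmanP, NewmanP, Finset.abs_prod]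
          apply Finset.prod_le_prod
          · intro i _; exact abs_nonneg _
          · intro i _
            have := pow_pos hξpos i
            rw [abs_le]; constructor <;> [linarith; linarith [abs_nonneg (-y + ξ ^ i)]]
        have := neg_abs_le (NewmanP n (-y))
        -- need strict: P(-y) > -P y
        rcases eq_or_lt_of_le habs with heq | hlt
        · -- |P(-y)| = P y: still fine, P(-y) = ±P y, if = -P y then sum 0? need >0.
          -- |−y+ξ^i| ≤ y+ξ^i strict unless y = 0 or product zero (excluded).
          by_cases hy0 : y = 0
          · subst hy0; simp only [neg_zero]; linarith
          · exfalso
            have hy' : 0 < y := lt_of_le_of_ne hy (Ne.symm hy0)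
            have hstrict : |NewmanP n (-y)| < NewmanP n y := by
              rw [NewmanP, NewmanP, Finset.abs_prod]
              apply Finset.prod_lt_prod_of_nonempty
              · intro i hmem
                rw [abs_pos]
                intro h0
                apply hz
                rw [NewmanP]
                exact Finset.prod_eq_zero hmem h0
              · intro i _
                have := pow_pos hξpos i
                rw [abs_lt]; constructor <;> linarith
              · exact Finset.nonempty_range_iff.mpr (by omega)
            rw [heq] at hstrict; exact lt_irrefl _ hstrict
        · linarith
    intro y
    rcases le_or_gt 0 y with hy | hy
    · exact key y hy
    · have := key (-y) (by linarith)
      rw [neg_neg] at this; linarith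
  -- nonvanishing of factors at x
  have hx1 : ∀ i ∈ Finset.range n, x + ξ ^ i ≠ 0 := by
    intro i hi h
    apply hne i hi
    have hx' : x = -ξ ^ i := by linarith
    rw [hx', pow_mul]; ring
  have hx2 : ∀ i ∈ Finset.range n, -x + ξ ^ i ≠ 0 := by
    intro i hi h
    apply hne i hi
    have hx' : x = ξ ^ i := by linarith
    rw [hx', pow_mul]; ring
  have hP1 : NewmanP n x ≠ 0 := Finset.prod_ne_zero_iff.mpr hx1
  have hP2 : NewmanP n (-x) ≠ 0 := Finset.prod_ne_zero_iff.mpr hx2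
  have hg : NewmanP n x + NewmanP n (-x) ≠ 0 := ne_of_gt (hgpos x)
  -- derivative of NewmanP
  set D : ℝ → ℝ := fun y => ∑ i ∈ Finset.range n, ∏ j ∈ (Finset.range n).erase i, (y + ξ ^ j)
    with hDdef
  have hD : ∀ y : ℝ, HasDerivAt (NewmanP n) (D y) y := by
    intro y
    have h := HasDerivAt.fun_finsetProd (u := Finset.range n)
      (f := fun i z => z + ξ ^ i) (f' := fun _ => (1 : ℝ)) (x := y)
      (fun i _ => (hasDerivAt_id y).add_const (ξ ^ i))
    have hN : NewmanP n = fun z => ∏ i ∈ Finset.range n, (z + ξ ^ i) := rfl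
    rw [hN]
    simpa [NewmanP, D] using h
  have hDneg : ∀ y : ℝ, HasDerivAt (fun z => NewmanP n (-z)) (-(D (-y))) y := by
    intro y
    simpa [Function.comp_def] using (hD (-y)).comp y (hasDerivAt_neg y)
  have hnum : HasDerivAt (fun z => NewmanP n z - NewmanP n (-z)) (D x + D (-x)) x := by
    simpa using (hD x).fun_sub (hDneg x)
  have hden : HasDerivAt (fun z => NewmanP n z + NewmanP n (-z)) (D x - D (-x)) x := by
    simpa [sub_eq_add_neg] using (hD x).fun_add (hDneg x)
  have hdiv := (hnum.div hden hg)
  have hderiv : deriv (newmanRat n) x =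
      ((D x + D (-x)) * (NewmanP n x + NewmanP n (-x)) -
        (NewmanP n x - NewmanP n (-x)) * (D x - D (-x))) /
        (NewmanP n x + NewmanP n (-x)) ^ 2 := by
    have : newmanRat n = fun z => (NewmanP n z - NewmanP n (-z)) / (NewmanP n z + NewmanP n (-z)) := rfl
    rw [this]
    exact hdiv.deriv
  rw [hderiv]
  -- key algebraic identity
  have hkey : D x * NewmanP n (-x) + NewmanP n x * D (-x) =
      2 * (NewmanP n x * NewmanP n (-x)) *
        ∑ i ∈ Finset.range n, ξ ^ i / (ξ ^ (2 * i) - x ^ 2) := by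
    rw [hDdef]
    simp only [Finset.sum_mul, Finset.mul_sum, ← Finset.sum_add_distrib]
    apply Finset.sum_congr rfl
    intro i hi
    have hPx : NewmanP n x = (x + ξ ^ i) * ∏ j ∈ (Finset.range n).erase i, (x + ξ ^ j) :=
      (Finset.mul_prod_erase _ _ hi).symm
    have hPnx : NewmanP n (-x) = (-x + ξ ^ i) * ∏ j ∈ (Finset.range n).erase i, (-x + ξ ^ j) :=
      (Finset.mul_prod_erase _ _ hi).symm
    have ha := hx1 i hi
    have hb := hx2 i hi
    have hden2 : ξ ^ (2 * i) - x ^ 2 ≠ 0 := by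
      intro h
      apply hne i hi
      linarith
    rw [hPx, hPnx]
    have h2i : ξ ^ (2 * i) = ξ ^ i * ξ ^ i := by rw [pow_mul]; ring
    field_simp
    ring_nf
  have : (D x + D (-x)) * (NewmanP n x + NewmanP n (-x)) -
      (NewmanP n x - NewmanP n (-x)) * (D x - D (-x)) =
      2 * (D x * NewmanP n (-x) + NewmanP n x * D (-x)) := by ring
  rw [this, hkey]
  ring
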